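/- Let d = 3, 𝕊 = {{1,2},{2,3},{1,3}} and X = [r] × [2] × [2] for some r ∈ ℕ. Then for every consistent family P_𝕊 ∈ 𝒫_𝕊^cons, R(P_𝕊) = 2 max_{j ∈ [2]} { p_{•j1} − ∑_{i=1}^r min(p_{ij•}, p_{i•1}) }_+, where p_{ij•} = P_{{1,2}}({(i,j)}), p_{i•1} = P_{{1,3}}({(i,1)}), p_{•j1} = P_{{2,3}}({(j,1)}), and y_+ = max(y,0). -/

import Mathlib

/-- The family `(P_{{1,2}}, P_{{2,3}}, P_{{1,3}})` of pairwise mass functions on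
`[r] × [s] × [u]` consists of probability mass functions. -/
def ProbTriple (r s u : ℕ) (p12 : Fin r → Fin s → ℝ) (p23 : Fin s → Fin u → ℝ)
    (p13 : Fin r → Fin u → ℝ) : Prop :=
  (∀ i j, 0 ≤ p12 i j) ∧ (∀ j k, 0 ≤ p23 j k) ∧ (∀ i k, 0 ≤ p13 i k) ∧
    (∑ i, ∑ j, p12 i j = 1) ∧ (∑ j, ∑ k, p23 j k = 1) ∧ (∑ i, ∑ k, p13 i k = 1)

/-- Consistency of the family of pairwise margins. -/
def ConsTriple (r s u : ℕ) (p12 : Fin r → Fin s → ℝ) (p23 : Fin s → Fin u → ℝ)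
    (p13 : Fin r → Fin u → ℝ) : Prop :=
  (∀ i, ∑ j, p12 i j = ∑ k, p13 i k) ∧
    (∀ j, ∑ i, p12 i j = ∑ k, p23 j k) ∧
    (∀ k, ∑ j, p23 j k = ∑ i, p13 i k)

/-- Compatibility: existence of a joint pmf on `[r] × [s] × [u]` with the given margins. -/
def CompatTriple (r s u : ℕ) (p12 : Fin r → Fin s → ℝ) (p23 : Fin s → Fin u → ℝ)
    (p13 : Fin r → Fin u → ℝ) : Prop :=
  ∃ q : Fin r → Fin s → Fin u → ℝ,
    (∀ i j k, 0 ≤ q i j k) ∧ (∑ i, ∑ j, ∑ k, q i j k = 1) ∧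
      (∀ i j, p12 i j = ∑ k, q i j k) ∧ (∀ j k, p23 j k = ∑ i, q i j k) ∧
      (∀ i k, p13 i k = ∑ j, q i j k)

/-- The incompatibility index `R(P_𝕊)` for `𝕊 = {{1,2},{2,3},{1,3}}`. -/
noncomputable def RTriple (r s u : ℕ) (p12 : Fin r → Fin s → ℝ) (p23 : Fin s → Fin u → ℝ)
    (p13 : Fin r → Fin u → ℝ) : ℝ :=
  sSup {t | ∃ (f12 : Fin r → Fin s → ℝ) (f23 : Fin s → Fin u → ℝ) (f13 : Fin r → Fin u → ℝ),
    (∀ i j, -1 ≤ f12 i j) ∧ (∀ j k, -1 ≤ f23 j k) ∧ (∀ i k, -1 ≤ f13 i k) ∧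
    (∀ i j k, 0 ≤ f12 i j + f23 j k + f13 i k) ∧
    t = -(1 / 3) * ((∑ i, ∑ j, f12 i j * p12 i j) + (∑ j, ∑ k, f23 j k * p23 j k) +
          (∑ i, ∑ k, f13 i k * p13 i k))}


lemma lb_core (r : ℕ) (a a' b b' : Fin r → ℝ) (c00 c01 c10 c11 : ℝ)
    (hab : ∀ i, a i + a' i = b i + b' i)
    (hsa : ∑ i, a i = c00 + c01) (hsb : ∑ i, b i = c00 + c10)
    (hsb' : ∑ i, b' i = c01 + c11) :
    ∃ g0 g1 h0 h1 : Fin r → ℝ,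
      (∀ i, -1 ≤ g0 i) ∧ (∀ i, -1 ≤ g1 i) ∧ (∀ i, -1 ≤ h0 i) ∧ (∀ i, -1 ≤ h1 i) ∧
      (∀ i, 0 ≤ g0 i + (-1 : ℝ) + h0 i) ∧ (∀ i, 0 ≤ g0 i + 2 + h1 i) ∧
      (∀ i, 0 ≤ g1 i + 2 + h0 i) ∧ (∀ i, 0 ≤ g1 i + (-1 : ℝ) + h1 i) ∧
      (∑ i, (g0 i * a i + g1 i * a' i + h0 i * b i + h1 i * b' i))
        + ((-1) * c00 + 2 * c01 + 2 * c10 + (-1) * c11)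
        = -6 * (c00 - ∑ i, min (a i) (b i)) := by
  refine ⟨fun i => if a i ≤ b i then 2 else -1, fun i => if a i ≤ b i then -1 else 2,
    fun i => if a i ≤ b i then -1 else 2, fun i => if a i ≤ b i then 2 else -1,
    ?_, ?_, ?_, ?_, ?_, ?_, ?_, ?_, ?_⟩ <;>
    try (intro i; by_cases h : a i ≤ b i <;> simp [h] <;> norm_num)
  have hpt : ∀ i ∈ Finset.univ, ((if a i ≤ b i then (2:ℝ) else -1) * a i +
      (if a i ≤ b i then (-1:ℝ) else 2) * a' i + (if a i ≤ b i then (-1:ℝ) else 2) * b i +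
      (if a i ≤ b i then (2:ℝ) else -1) * b' i)
      = 6 * min (a i) (b i) - 3 * a i - 2 * b i + b' i := by
    intro i _
    by_cases h : a i ≤ b i <;> simp [h, min_def] <;> nlinarith [hab i]
  rw [Finset.sum_congr rfl hpt]
  have hsplit : ∑ i, (6 * min (a i) (b i) - 3 * a i - 2 * b i + b' i)
      = 6 * (∑ i, min (a i) (b i)) - 3 * (∑ i, a i) - 2 * (∑ i, b i) + ∑ i, b' i := by
    simp [Finset.sum_add_distrib, Finset.sum_sub_distrib, Finset.mul_sum]
  rw [hsplit, hsa, hsb, hsb']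
  ring


lemma ub_core (r : ℕ) (a a' b b' : Fin r → ℝ) (c00 c01 c10 c11 D : ℝ)
    (q00 q01 q10 q11 : Fin r → ℝ)
    (hq00 : ∀ i, 0 ≤ q00 i) (hq01 : ∀ i, 0 ≤ q01 i)
    (hq10 : ∀ i, 0 ≤ q10 i) (hq11 : ∀ i, 0 ≤ q11 i)
    (hra : ∀ i, q00 i + q01 i ≤ a i) (hra' : ∀ i, q10 i + q11 i ≤ a' i)
    (hrb : ∀ i, q00 i + q10 i ≤ b i) (hrb' : ∀ i, q01 i + q11 i ≤ b' i)
    (hc0 : ∑ i, q00 i ≤ c00) (hc1 : ∑ i, q01 i ≤ c01)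
    (hc2 : ∑ i, q10 i ≤ c10) (hc3 : ∑ i, q11 i ≤ c11)
    (htot : ∑ i, (q00 i + q01 i + q10 i + q11 i) = 1 - 2 * D)
    (hS1 : ∑ i, (a i + a' i) = 1) (hS2 : ∑ i, (b i + b' i) = 1)
    (hSc : c00 + c01 + c10 + c11 = 1)
    (g0 g1 h0 h1 : Fin r → ℝ) (e00 e01 e10 e11 : ℝ)
    (hg0 : ∀ i, -1 ≤ g0 i) (hg1 : ∀ i, -1 ≤ g1 i)
    (hh0 : ∀ i, -1 ≤ h0 i) (hh1 : ∀ i, -1 ≤ h1 i)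
    (he00 : -1 ≤ e00) (he01 : -1 ≤ e01) (he10 : -1 ≤ e10) (he11 : -1 ≤ e11)
    (hp00 : ∀ i, 0 ≤ g0 i + e00 + h0 i) (hp01 : ∀ i, 0 ≤ g0 i + e01 + h1 i)
    (hp10 : ∀ i, 0 ≤ g1 i + e10 + h0 i) (hp11 : ∀ i, 0 ≤ g1 i + e11 + h1 i) :
    -6 * D ≤ (∑ i, (g0 i * a i + g1 i * a' i + h0 i * b i + h1 i * b' i))
        + (e00 * c00 + e01 * c01 + e10 * c10 + e11 * c11) := by
  have hpt : ∀ i ∈ Finset.univ,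
      (-(a i + a' i + b i + b' i) + 2 * (q00 i + q01 i + q10 i + q11 i)
        - (e00 * q00 i + e01 * q01 i + e10 * q10 i + e11 * q11 i))
      ≤ g0 i * a i + g1 i * a' i + h0 i * b i + h1 i * b' i := by
    intro i _
    nlinarith [mul_nonneg (by linarith [hg0 i] : (0:ℝ) ≤ g0 i + 1)
        (by linarith [hra i] : (0:ℝ) ≤ a i - q00 i - q01 i),
      mul_nonneg (by linarith [hg1 i] : (0:ℝ) ≤ g1 i + 1)
        (by linarith [hra' i] : (0:ℝ) ≤ a' i - q10 i - q11 i),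
      mul_nonneg (by linarith [hh0 i] : (0:ℝ) ≤ h0 i + 1)
        (by linarith [hrb i] : (0:ℝ) ≤ b i - q00 i - q10 i),
      mul_nonneg (by linarith [hh1 i] : (0:ℝ) ≤ h1 i + 1)
        (by linarith [hrb' i] : (0:ℝ) ≤ b' i - q01 i - q11 i),
      mul_nonneg (hp00 i) (hq00 i), mul_nonneg (hp01 i) (hq01 i),
      mul_nonneg (hp10 i) (hq10 i), mul_nonneg (hp11 i) (hq11 i)]
  have hsum := Finset.sum_le_sum hpt
  have e1 : ∀ (f g : Fin r → ℝ), ∑ i, (f i + g i) = ∑ i, f i + ∑ i, g i :=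
    fun f g => Finset.sum_add_distrib
  have e3 : ∀ (c : ℝ) (f : Fin r → ℝ), ∑ i, c * f i = c * ∑ i, f i :=
    fun c f => (Finset.mul_sum _ _ _).symm
  have hsplit : ∑ i, (-(a i + a' i + b i + b' i) + 2 * (q00 i + q01 i + q10 i + q11 i)
        - (e00 * q00 i + e01 * q01 i + e10 * q10 i + e11 * q11 i))
      = (-1) * (∑ i, (a i + a' i)) + ((-1) * (∑ i, (b i + b' i))
        + (2 * (∑ i, (q00 i + q01 i + q10 i + q11 i))
        + ((-e00) * (∑ i, q00 i) + ((-e01) * (∑ i, q01 i)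
        + ((-e10) * (∑ i, q10 i) + (-e11) * (∑ i, q11 i)))))) := by
    rw [← e3, ← e3, ← e3, ← e3, ← e3, ← e3, ← e3, ← e1, ← e1, ← e1, ← e1, ← e1, ← e1]
    exact Finset.sum_congr rfl (fun i _ => by ring)
  rw [hsplit, hS1, hS2, htot] at hsum
  have hQ : ∑ i, q00 i + ∑ i, q01 i + ∑ i, q10 i + ∑ i, q11 i = 1 - 2 * D := by
    rw [← htot, e1, e1, e1]
  nlinarith [hQ, mul_nonneg (by linarith : (0:ℝ) ≤ e00 + 1) (by linarith : (0:ℝ) ≤ c00 - ∑ i, q00 i),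
    mul_nonneg (by linarith : (0:ℝ) ≤ e01 + 1) (by linarith : (0:ℝ) ≤ c01 - ∑ i, q01 i),
    mul_nonneg (by linarith : (0:ℝ) ≤ e10 + 1) (by linarith : (0:ℝ) ≤ c10 - ∑ i, q10 i),
    mul_nonneg (by linarith : (0:ℝ) ≤ e11 + 1) (by linarith : (0:ℝ) ≤ c11 - ∑ i, q11 i)]


lemma cons_incompat (r : ℕ) (a a' b b' : Fin r → ℝ) (c00 c01 c10 c11 : ℝ)
    (ha : ∀ i, 0 ≤ a i) (ha' : ∀ i, 0 ≤ a' i) (hb : ∀ i, 0 ≤ b i) (hb' : ∀ i, 0 ≤ b' i)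
    (hc01 : 0 ≤ c01) (hc10 : 0 ≤ c10)
    (hab : ∀ i, a i + a' i = b i + b' i)
    (hsa : ∑ i, a i = c00 + c01) (hsa' : ∑ i, a' i = c10 + c11)
    (hsb : ∑ i, b i = c00 + c10)
    (hone : c00 + c01 + c10 + c11 = 1)
    (hD : 0 < c00 - ∑ i, min (a i) (b i)) :
    ∃ q00 q01 q10 q11 : Fin r → ℝ,
      (∀ i, 0 ≤ q00 i) ∧ (∀ i, 0 ≤ q01 i) ∧ (∀ i, 0 ≤ q10 i) ∧ (∀ i, 0 ≤ q11 i) ∧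
      (∀ i, q00 i + q01 i ≤ a i) ∧ (∀ i, q10 i + q11 i ≤ a' i) ∧
      (∀ i, q00 i + q10 i ≤ b i) ∧ (∀ i, q01 i + q11 i ≤ b' i) ∧
      (∑ i, q00 i ≤ c00) ∧ (∑ i, q01 i ≤ c01) ∧ (∑ i, q10 i ≤ c10) ∧ (∑ i, q11 i ≤ c11) ∧
      (∑ i, (q00 i + q01 i + q10 i + q11 i)
        = 1 - 2 * (c00 - ∑ i, min (a i) (b i))) := by
  have e1 : ∀ (f g : Fin r → ℝ), ∑ i, (f i + g i) = ∑ i, f i + ∑ i, g i :=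
    fun f g => Finset.sum_add_distrib
  have e2 : ∀ (f g : Fin r → ℝ), ∑ i, (f i - g i) = ∑ i, f i - ∑ i, g i :=
    fun f g => Finset.sum_sub_distrib f g
  have e3 : ∀ (c : ℝ) (f : Fin r → ℝ), ∑ i, c * f i = c * ∑ i, f i :=
    fun c f => (Finset.mul_sum _ _ _).symm
  set M : Fin r → ℝ := fun i => min (a i) (b i) with hM
  set Δ : ℝ := c00 - ∑ i, M i with hΔdef
  have hd1 : 0 < Δ + c01 := by linarith
  have hd2 : 0 < Δ + c10 := by linarith
  have hr1 : 0 ≤ c01 / (Δ + c01) := div_nonneg hc01 hd1.le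
  have hr1' : c01 / (Δ + c01) ≤ 1 := (div_le_one hd1).2 (by linarith)
  have hr2 : 0 ≤ c10 / (Δ + c10) := div_nonneg hc10 hd2.le
  have hr2' : c10 / (Δ + c10) ≤ 1 := (div_le_one hd2).2 (by linarith)
  have hMa : ∀ i, M i ≤ a i := fun i => min_le_left _ _
  have hMb : ∀ i, M i ≤ b i := fun i => min_le_right _ _
  have hM0 : ∀ i, 0 ≤ M i := fun i => le_min (ha i) (hb i)
  have hMba : ∀ i, b i - a' i ≤ M i := by
    intro i
    rcases le_total (a i) (b i) with h | h
    · have : M i = a i := by rw [hM]; exact min_eq_left h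
      rw [this]; linarith [hab i, hb' i]
    · have : M i = b i := by rw [hM]; exact min_eq_right h
      rw [this]; linarith [ha' i]
  set q00 : Fin r → ℝ := fun i => M i with hq00
  set q01 : Fin r → ℝ := fun i => (c01 / (Δ + c01)) * (a i - M i) with hq01
  set q10 : Fin r → ℝ := fun i => (c10 / (Δ + c10)) * (b i - M i) with hq10
  set q11 : Fin r → ℝ := fun i => a' i + M i - b i with hq11
  have hq00e : ∀ i, q00 i = M i := fun _ => rfl
  have hq01e : ∀ i, q01 i = (c01 / (Δ + c01)) * (a i - M i) := fun _ => rfl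
  have hq10e : ∀ i, q10 i = (c10 / (Δ + c10)) * (b i - M i) := fun _ => rfl
  have hq11e : ∀ i, q11 i = a' i + M i - b i := fun _ => rfl
  have hb01 : ∀ i, q01 i ≤ a i - M i := fun i =>
    mul_le_of_le_one_left (by linarith [hMa i]) hr1'
  have hb10 : ∀ i, q10 i ≤ b i - M i := fun i =>
    mul_le_of_le_one_left (by linarith [hMb i]) hr2'
  have hs00 : ∑ i, q00 i = c00 - Δ := by rw [hΔdef]; ring
  have hs01 : ∑ i, q01 i = c01 := by
    have : ∑ i, q01 i = (c01 / (Δ + c01)) * (∑ i, a i - ∑ i, M i) := by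
      rw [← e2, ← e3]
    rw [this, hsa]
    have h9 : c00 + c01 - ∑ i, M i = Δ + c01 := by rw [hΔdef]; ring
    rw [h9, div_mul_cancel₀ _ hd1.ne']
  have hs10 : ∑ i, q10 i = c10 := by
    have : ∑ i, q10 i = (c10 / (Δ + c10)) * (∑ i, b i - ∑ i, M i) := by
      rw [← e2, ← e3]
    rw [this, hsb]
    have h9 : c00 + c10 - ∑ i, M i = Δ + c10 := by rw [hΔdef]; ring
    rw [h9, div_mul_cancel₀ _ hd2.ne']
  have hs11 : ∑ i, q11 i = c11 - Δ := by
    have : ∑ i, q11 i = (∑ i, a' i + ∑ i, M i) - ∑ i, b i := by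
      rw [← e1, ← e2]
    rw [this, hsa', hsb]; rw [hΔdef]; ring
  refine ⟨q00, q01, q10, q11,
    fun i => by rw [hq00e i]; exact hM0 i,
    fun i => by rw [hq01e i]; exact mul_nonneg hr1 (by linarith [hMa i]),
    fun i => by rw [hq10e i]; exact mul_nonneg hr2 (by linarith [hMb i]),
    fun i => by rw [hq11e i]; linarith [hMba i],
    fun i => by linarith [hb01 i, hq00e i],
    fun i => by linarith [hb10 i, hq11e i, hMa i],
    fun i => by linarith [hb10 i, hq00e i],
    fun i => by linarith [hb01 i, hq11e i, hab i],
    by linarith, le_of_eq hs01, le_of_eq hs10, by linarith,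
    by rw [e1, e1, e1, hs00, hs01, hs10, hs11]; linarith⟩


lemma cons_compat (r : ℕ) (a a' b b' : Fin r → ℝ) (c00 c01 c10 c11 : ℝ)
    (ha : ∀ i, 0 ≤ a i) (ha' : ∀ i, 0 ≤ a' i) (hb : ∀ i, 0 ≤ b i) (hb' : ∀ i, 0 ≤ b' i)
    (hab : ∀ i, a i + a' i = b i + b' i)
    (hsa : ∑ i, a i = c00 + c01) (hsa' : ∑ i, a' i = c10 + c11)
    (hsb : ∑ i, b i = c00 + c10)
    (hone : c00 + c01 + c10 + c11 = 1)
    (hlo : ∑ i, max (b i - a' i) 0 ≤ c00)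
    (hhi : c00 ≤ ∑ i, min (a i) (b i)) :
    ∃ q00 q01 q10 q11 : Fin r → ℝ,
      (∀ i, 0 ≤ q00 i) ∧ (∀ i, 0 ≤ q01 i) ∧ (∀ i, 0 ≤ q10 i) ∧ (∀ i, 0 ≤ q11 i) ∧
      (∀ i, q00 i + q01 i ≤ a i) ∧ (∀ i, q10 i + q11 i ≤ a' i) ∧
      (∀ i, q00 i + q10 i ≤ b i) ∧ (∀ i, q01 i + q11 i ≤ b' i) ∧
      (∑ i, q00 i ≤ c00) ∧ (∑ i, q01 i ≤ c01) ∧ (∑ i, q10 i ≤ c10) ∧ (∑ i, q11 i ≤ c11) ∧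
      (∑ i, (q00 i + q01 i + q10 i + q11 i) = 1) := by
  have e1 : ∀ (f g : Fin r → ℝ), ∑ i, (f i + g i) = ∑ i, f i + ∑ i, g i :=
    fun f g => Finset.sum_add_distrib
  have e2 : ∀ (f g : Fin r → ℝ), ∑ i, (f i - g i) = ∑ i, f i - ∑ i, g i :=
    fun f g => Finset.sum_sub_distrib f g
  have e3 : ∀ (c : ℝ) (f : Fin r → ℝ), ∑ i, c * f i = c * ∑ i, f i :=
    fun c f => (Finset.mul_sum _ _ _).symm
  have hmM : ∀ i, max (b i - a' i) 0 ≤ min (a i) (b i) := by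
    intro i
    apply max_le
    · exact le_min (by linarith [hab i, hb' i]) (by linarith [ha' i])
    · exact le_min (ha i) (hb i)
  set m : Fin r → ℝ := fun i => max (b i - a' i) 0 with hm
  set M : Fin r → ℝ := fun i => min (a i) (b i) with hM
  have hm0 : ∀ i, 0 ≤ m i := fun i => le_max_right _ _
  have hmba : ∀ i, b i - a' i ≤ m i := fun i => le_max_left _ _
  have hMa : ∀ i, M i ≤ a i := fun i => min_le_left _ _
  have hMb : ∀ i, M i ≤ b i := fun i => min_le_right _ _
  have hsmM : ∑ i, m i ≤ ∑ i, M i :=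
    Finset.sum_le_sum (fun i (_ : i ∈ Finset.univ) => hmM i)
  set D : ℝ := ∑ i, M i - ∑ i, m i with hDdef
  have hD0 : 0 ≤ D := by rw [hDdef]; linarith
  set κ : ℝ := if D = 0 then 0 else (c00 - ∑ i, m i) / D with hκ
  have hκ0 : 0 ≤ κ := by
    rw [hκ]; split_ifs with h
    · exact le_refl 0
    · exact div_nonneg (by linarith) (hD0.lt_of_ne' h).le
  have hκ1 : κ ≤ 1 := by
    rw [hκ]; split_ifs with h
    · norm_num
    · exact (div_le_one (hD0.lt_of_ne' h)).2 (by rw [hDdef] at h ⊢; linarith)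
  have hκD : κ * D = c00 - ∑ i, m i := by
    rw [hκ]; split_ifs with h
    · rw [hDdef] at h; linarith
    · exact div_mul_cancel₀ _ h
  set al : Fin r → ℝ := fun i => m i + κ * (M i - m i) with hal
  have hale : ∀ i, al i = m i + κ * (M i - m i) := fun _ => rfl
  have hal1 : ∀ i, m i ≤ al i := by
    intro i
    have := mul_nonneg hκ0 (by linarith [hmM i] : (0:ℝ) ≤ M i - m i)
    rw [hale i]; linarith
  have hal2 : ∀ i, al i ≤ M i := by
    intro i
    have := mul_le_of_le_one_left (by linarith [hmM i] : (0:ℝ) ≤ M i - m i) hκ1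
    rw [hale i]; linarith
  have hsal : ∑ i, al i = c00 := by
    have : ∑ i, al i = ∑ i, m i + κ * (∑ i, M i - ∑ i, m i) := by
      rw [← e2, ← e3, ← e1]
    rw [this, ← hDdef, hκD]; ring
  set q00 : Fin r → ℝ := fun i => al i with hq00
  set q01 : Fin r → ℝ := fun i => a i - al i with hq01
  set q10 : Fin r → ℝ := fun i => b i - al i with hq10
  set q11 : Fin r → ℝ := fun i => a' i - b i + al i with hq11
  have hq00e : ∀ i, q00 i = al i := fun _ => rfl
  have hq01e : ∀ i, q01 i = a i - al i := fun _ => rfl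
  have hq10e : ∀ i, q10 i = b i - al i := fun _ => rfl
  have hq11e : ∀ i, q11 i = a' i - b i + al i := fun _ => rfl
  have hs01 : ∑ i, q01 i = c01 := by
    have : ∑ i, q01 i = ∑ i, a i - ∑ i, al i := e2 a al
    rw [this, hsa, hsal]; ring
  have hs10 : ∑ i, q10 i = c10 := by
    have : ∑ i, q10 i = ∑ i, b i - ∑ i, al i := e2 b al
    rw [this, hsb, hsal]; ring
  have hs11 : ∑ i, q11 i = c11 := by
    have : ∑ i, q11 i = (∑ i, a' i - ∑ i, b i) + ∑ i, al i := by
      rw [← e2, ← e1]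
    rw [this, hsa', hsb, hsal]; ring
  refine ⟨q00, q01, q10, q11,
    fun i => by rw [hq00e i]; linarith [hal1 i, hm0 i],
    fun i => by rw [hq01e i]; linarith [hal2 i, hMa i],
    fun i => by rw [hq10e i]; linarith [hal2 i, hMb i],
    fun i => by rw [hq11e i]; linarith [hal1 i, hmba i],
    fun i => by rw [hq00e i, hq01e i]; linarith,
    fun i => by rw [hq10e i, hq11e i]; linarith,
    fun i => by rw [hq00e i, hq10e i]; linarith,
    fun i => by rw [hq01e i, hq11e i]; linarith [hab i],
    le_of_eq hsal, le_of_eq hs01, le_of_eq hs10, le_of_eq hs11, ?_⟩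
  have : ∑ i, (q00 i + q01 i + q10 i + q11 i) = ∑ i, (a i + a' i) :=
    Finset.sum_congr rfl (fun i _ => by
      rw [hq00e i, hq01e i, hq10e i, hq11e i]; ring)
  rw [this, e1, hsa, hsa']; linarith

/-- exact incompatibility index on `[r] × [2] × [2]`.
Here the value `1 ∈ [2]` corresponds to `(0 : Fin 2)`. -/
theorem statement_9 (r : ℕ) (hr : 0 < r)
    (p12 : Fin r → Fin 2 → ℝ) (p23 : Fin 2 → Fin 2 → ℝ) (p13 : Fin r → Fin 2 → ℝ)
    (hprob : ProbTriple r 2 2 p12 p23 p13) (hcons : ConsTriple r 2 2 p12 p23 p13) :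
    RTriple r 2 2 p12 p23 p13 =
      2 * sSup {t | ∃ j : Fin 2,
        t = max (p23 j 0 - ∑ i, min (p12 i j) (p13 i 0)) 0} := by
  obtain ⟨h12n, h23n, h13n, hs12, hs23, hs13⟩ := hprob
  obtain ⟨hcn1, hcn2, hcn3⟩ := hcons
  simp only [Fin.sum_univ_two] at hs12 hs23 hs13 hcn1 hcn2 hcn3
  have e1 : ∀ (f g : Fin r → ℝ), ∑ i, (f i + g i) = ∑ i, f i + ∑ i, g i :=
    fun f g => Finset.sum_add_distrib
  set Δ0 : ℝ := p23 0 0 - ∑ i, min (p12 i 0) (p13 i 0) with hΔ0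
  set Δ1 : ℝ := p23 1 0 - ∑ i, min (p12 i 1) (p13 i 0) with hΔ1
  -- identify the RHS
  have hset : {t | ∃ j : Fin 2, t = max (p23 j 0 - ∑ i, min (p12 i j) (p13 i 0)) 0}
      = {max Δ0 0, max Δ1 0} := by
    ext t
    simp only [Set.mem_setOf_eq, Fin.exists_fin_two, Set.mem_insert_iff,
      Set.mem_singleton_iff, ← hΔ0, ← hΔ1]
  rw [hset, csSup_pair]
  rw [RTriple]
  set T : ℝ := 2 * (max Δ0 0 ⊔ max Δ1 0) with hT
  -- membership of 0
  have hmem00 : (0:ℝ) ∈ {t | ∃ (f12 : Fin r → Fin 2 → ℝ) (f23 : Fin 2 → Fin 2 → ℝ)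
      (f13 : Fin r → Fin 2 → ℝ),
      (∀ i j, -1 ≤ f12 i j) ∧ (∀ j k, -1 ≤ f23 j k) ∧ (∀ i k, -1 ≤ f13 i k) ∧
      (∀ i j k, 0 ≤ f12 i j + f23 j k + f13 i k) ∧
      (0:ℝ) = -(1 / 3) * ((∑ i, ∑ j, f12 i j * p12 i j) + (∑ j, ∑ k, f23 j k * p23 j k) +
            (∑ i, ∑ k, f13 i k * p13 i k))} := by
    refine ⟨fun _ _ => 0, fun _ _ => 0, fun _ _ => 0, fun _ _ => by norm_num,
      fun _ _ => by norm_num, fun _ _ => by norm_num, fun _ _ _ => by norm_num, by simp⟩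
  -- membership of 2 * Δ0
  have hmem0 : (2 * Δ0) ∈ {t | ∃ (f12 : Fin r → Fin 2 → ℝ) (f23 : Fin 2 → Fin 2 → ℝ)
      (f13 : Fin r → Fin 2 → ℝ),
      (∀ i j, -1 ≤ f12 i j) ∧ (∀ j k, -1 ≤ f23 j k) ∧ (∀ i k, -1 ≤ f13 i k) ∧
      (∀ i j k, 0 ≤ f12 i j + f23 j k + f13 i k) ∧
      (2 * Δ0) = -(1 / 3) * ((∑ i, ∑ j, f12 i j * p12 i j) + (∑ j, ∑ k, f23 j k * p23 j k) +
            (∑ i, ∑ k, f13 i k * p13 i k))} := by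
    obtain ⟨g0, g1, h0, h1, B1, B2, B3, B4, F1, F2, F3, F4, hval⟩ :=
      lb_core r (fun i => p12 i 0) (fun i => p12 i 1) (fun i => p13 i 0) (fun i => p13 i 1)
        (p23 0 0) (p23 0 1) (p23 1 0) (p23 1 1)
        hcn1 (hcn2 0) (by linarith [hcn3 0]) (by linarith [hcn3 1])
    refine ⟨fun i j => if j = 0 then g0 i else g1 i,
      fun j k => if j = 0 then (if k = 0 then -1 else 2) else (if k = 0 then 2 else -1),
      fun i k => if k = 0 then h0 i else h1 i, ?_, ?_, ?_, ?_, ?_⟩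
    · intro i j; fin_cases j
      · simpa using B1 i
      · simpa using B2 i
    · intro j k; fin_cases j <;> fin_cases k <;> norm_num
    · intro i k; fin_cases k
      · simpa using B3 i
      · simpa using B4 i
    · intro i j k; fin_cases j <;> fin_cases k <;> simp <;>
        [linarith [F1 i]; linarith [F2 i]; linarith [F3 i]; linarith [F4 i]]
    · have E12 : ∑ i, ∑ j, (fun i j => if j = 0 then g0 i else g1 i) i j * p12 i j
          = ∑ i, (g0 i * p12 i 0 + g1 i * p12 i 1) := by
        simp [Fin.sum_univ_two]
      have E13 : ∑ i, ∑ k, (fun i k => if k = 0 then h0 i else h1 i) i k * p13 i k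
          = ∑ i, (h0 i * p13 i 0 + h1 i * p13 i 1) := by
        simp [Fin.sum_univ_two]
      have E23 : (∑ j, ∑ k, (fun j k => if j = 0 then (if k = 0 then (-1:ℝ) else 2)
            else (if k = 0 then 2 else -1)) j k * p23 j k)
          = -p23 0 0 + 2 * p23 0 1 + 2 * p23 1 0 - p23 1 1 := by
        simp [Fin.sum_univ_two]; ring
      rw [E12, E13, E23]
      have hjoin : ∑ i, (g0 i * p12 i 0 + g1 i * p12 i 1)
            + ∑ i, (h0 i * p13 i 0 + h1 i * p13 i 1)
          = ∑ i, (g0 i * p12 i 0 + g1 i * p12 i 1 + h0 i * p13 i 0 + h1 i * p13 i 1) := by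
        rw [← e1]
        exact Finset.sum_congr rfl (fun i _ => by ring)
      linarith [hval, hjoin, hΔ0]
  -- membership of 2 * Δ1
  have hmem1 : (2 * Δ1) ∈ {t | ∃ (f12 : Fin r → Fin 2 → ℝ) (f23 : Fin 2 → Fin 2 → ℝ)
      (f13 : Fin r → Fin 2 → ℝ),
      (∀ i j, -1 ≤ f12 i j) ∧ (∀ j k, -1 ≤ f23 j k) ∧ (∀ i k, -1 ≤ f13 i k) ∧
      (∀ i j k, 0 ≤ f12 i j + f23 j k + f13 i k) ∧
      (2 * Δ1) = -(1 / 3) * ((∑ i, ∑ j, f12 i j * p12 i j) + (∑ j, ∑ k, f23 j k * p23 j k) +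
            (∑ i, ∑ k, f13 i k * p13 i k))} := by
    obtain ⟨g0, g1, h0, h1, B1, B2, B3, B4, F1, F2, F3, F4, hval⟩ :=
      lb_core r (fun i => p12 i 1) (fun i => p12 i 0) (fun i => p13 i 0) (fun i => p13 i 1)
        (p23 1 0) (p23 1 1) (p23 0 0) (p23 0 1)
        (fun i => by linarith [hcn1 i]) (hcn2 1) (by linarith [hcn3 0]) (by linarith [hcn3 1])
    refine ⟨fun i j => if j = 0 then g1 i else g0 i,
      fun j k => if j = 0 then (if k = 0 then 2 else -1) else (if k = 0 then -1 else 2),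
      fun i k => if k = 0 then h0 i else h1 i, ?_, ?_, ?_, ?_, ?_⟩
    · intro i j; fin_cases j
      · simpa using B2 i
      · simpa using B1 i
    · intro j k; fin_cases j <;> fin_cases k <;> norm_num
    · intro i k; fin_cases k
      · simpa using B3 i
      · simpa using B4 i
    · intro i j k; fin_cases j <;> fin_cases k <;> simp <;>
        [linarith [F3 i]; linarith [F4 i]; linarith [F1 i]; linarith [F2 i]]
    · have E12 : ∑ i, ∑ j, (fun i j => if j = 0 then g1 i else g0 i) i j * p12 i j
          = ∑ i, (g1 i * p12 i 0 + g0 i * p12 i 1) := by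
        simp [Fin.sum_univ_two]
      have E13 : ∑ i, ∑ k, (fun i k => if k = 0 then h0 i else h1 i) i k * p13 i k
          = ∑ i, (h0 i * p13 i 0 + h1 i * p13 i 1) := by
        simp [Fin.sum_univ_two]
      have E23 : (∑ j, ∑ k, (fun j k => if j = 0 then (if k = 0 then (2:ℝ) else -1)
            else (if k = 0 then -1 else 2)) j k * p23 j k)
          = 2 * p23 0 0 - p23 0 1 - p23 1 0 + 2 * p23 1 1 := by
        simp [Fin.sum_univ_two]; ring
      rw [E12, E13, E23]
      have hjoin : ∑ i, (g1 i * p12 i 0 + g0 i * p12 i 1)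
            + ∑ i, (h0 i * p13 i 0 + h1 i * p13 i 1)
          = ∑ i, (g0 i * p12 i 1 + g1 i * p12 i 0 + h0 i * p13 i 0 + h1 i * p13 i 1) := by
        rw [← e1]
        exact Finset.sum_congr rfl (fun i _ => by ring)
      linarith [hval, hjoin, hΔ1]
  -- upper bound
  have hub : ∀ t ∈ {t | ∃ (f12 : Fin r → Fin 2 → ℝ) (f23 : Fin 2 → Fin 2 → ℝ)
      (f13 : Fin r → Fin 2 → ℝ),
      (∀ i j, -1 ≤ f12 i j) ∧ (∀ j k, -1 ≤ f23 j k) ∧ (∀ i k, -1 ≤ f13 i k) ∧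
      (∀ i j k, 0 ≤ f12 i j + f23 j k + f13 i k) ∧
      t = -(1 / 3) * ((∑ i, ∑ j, f12 i j * p12 i j) + (∑ j, ∑ k, f23 j k * p23 j k) +
            (∑ i, ∑ k, f13 i k * p13 i k))}, t ≤ T := by
    intro t ht
    obtain ⟨f12, f23, f13, hbf12, hbf23, hbf13, hfeas, hteq⟩ := ht
    simp only [Fin.sum_univ_two] at hteq
    have hmax : 2 * Δ0 ≤ T ∧ 2 * Δ1 ≤ T ∧ 0 ≤ T := by
      refine ⟨?_, ?_, ?_⟩ <;> rw [hT] <;>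
        [linarith [le_max_left Δ0 (0:ℝ), le_sup_left (a := max Δ0 0) (b := max Δ1 0)];
         linarith [le_max_left Δ1 (0:ℝ), le_sup_right (a := max Δ0 0) (b := max Δ1 0)];
         linarith [le_max_right Δ0 (0:ℝ), le_sup_left (a := max Δ0 0) (b := max Δ1 0)]]
    have hjoin : ∑ i, (f12 i 0 * p12 i 0 + f12 i 1 * p12 i 1 + f13 i 0 * p13 i 0
          + f13 i 1 * p13 i 1)
        = ∑ i, (f12 i 0 * p12 i 0 + f12 i 1 * p12 i 1)
          + ∑ i, (f13 i 0 * p13 i 0 + f13 i 1 * p13 i 1) := by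
      rw [← e1]
      exact Finset.sum_congr rfl (fun i _ => by ring)
    have hjoin2 : ∑ i, (f12 i 1 * p12 i 1 + f12 i 0 * p12 i 0 + f13 i 0 * p13 i 0
          + f13 i 1 * p13 i 1)
        = ∑ i, (f12 i 0 * p12 i 0 + f12 i 1 * p12 i 1)
          + ∑ i, (f13 i 0 * p13 i 0 + f13 i 1 * p13 i 1) := by
      rw [← e1]
      exact Finset.sum_congr rfl (fun i _ => by ring)
    rcases lt_or_ge 0 Δ0 with hpos | hle0
    · obtain ⟨q00, q01, q10, q11, hq1, hq2, hq3, hq4, hq5, hq6, hq7, hq8,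
        hq9, hq10', hq11', hq12, hqt⟩ :=
        cons_incompat r (fun i => p12 i 0) (fun i => p12 i 1) (fun i => p13 i 0)
          (fun i => p13 i 1) (p23 0 0) (p23 0 1) (p23 1 0) (p23 1 1)
          (fun i => h12n i 0) (fun i => h12n i 1) (fun i => h13n i 0) (fun i => h13n i 1)
          (h23n 0 1) (h23n 1 0) hcn1 (hcn2 0) (hcn2 1) (by linarith [hcn3 0])
          (by linarith [hs23]) (by rw [hΔ0] at hpos; exact hpos)
      have key := ub_core r (fun i => p12 i 0) (fun i => p12 i 1) (fun i => p13 i 0)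
        (fun i => p13 i 1) (p23 0 0) (p23 0 1) (p23 1 0) (p23 1 1) Δ0
        q00 q01 q10 q11 hq1 hq2 hq3 hq4 hq5 hq6 hq7 hq8 hq9 hq10' hq11' hq12
        (by rw [hqt]; try rw [hΔ0]) hs12 hs13 (by linarith [hs23])
        (fun i => f12 i 0) (fun i => f12 i 1) (fun i => f13 i 0) (fun i => f13 i 1)
        (f23 0 0) (f23 0 1) (f23 1 0) (f23 1 1)
        (fun i => hbf12 i 0) (fun i => hbf12 i 1) (fun i => hbf13 i 0) (fun i => hbf13 i 1)
        (hbf23 0 0) (hbf23 0 1) (hbf23 1 0) (hbf23 1 1)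
        (fun i => hfeas i 0 0) (fun i => hfeas i 0 1) (fun i => hfeas i 1 0)
        (fun i => hfeas i 1 1)
      rw [hjoin] at key
      linarith [hmax.1]
    rcases lt_or_ge 0 Δ1 with hpos | hle1
    · obtain ⟨q00, q01, q10, q11, hq1, hq2, hq3, hq4, hq5, hq6, hq7, hq8,
        hq9, hq10', hq11', hq12, hqt⟩ :=
        cons_incompat r (fun i => p12 i 1) (fun i => p12 i 0) (fun i => p13 i 0)
          (fun i => p13 i 1) (p23 1 0) (p23 1 1) (p23 0 0) (p23 0 1)
          (fun i => h12n i 1) (fun i => h12n i 0) (fun i => h13n i 0) (fun i => h13n i 1)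
          (h23n 1 1) (h23n 0 0) (fun i => by linarith [hcn1 i]) (hcn2 1) (hcn2 0)
          (by linarith [hcn3 0]) (by linarith [hs23]) (by rw [hΔ1] at hpos; exact hpos)
      have key := ub_core r (fun i => p12 i 1) (fun i => p12 i 0) (fun i => p13 i 0)
        (fun i => p13 i 1) (p23 1 0) (p23 1 1) (p23 0 0) (p23 0 1) Δ1
        q00 q01 q10 q11 hq1 hq2 hq3 hq4 hq5 hq6 hq7 hq8 hq9 hq10' hq11' hq12
        (by rw [hqt]; try rw [hΔ1])
        (by rw [← hs12]; exact Finset.sum_congr rfl (fun i _ => by ring))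
        hs13 (by linarith [hs23])
        (fun i => f12 i 1) (fun i => f12 i 0) (fun i => f13 i 0) (fun i => f13 i 1)
        (f23 1 0) (f23 1 1) (f23 0 0) (f23 0 1)
        (fun i => hbf12 i 1) (fun i => hbf12 i 0) (fun i => hbf13 i 0) (fun i => hbf13 i 1)
        (hbf23 1 0) (hbf23 1 1) (hbf23 0 0) (hbf23 0 1)
        (fun i => hfeas i 1 0) (fun i => hfeas i 1 1) (fun i => hfeas i 0 0)
        (fun i => hfeas i 0 1)
      rw [hjoin2] at key
      linarith [hmax.2.1]
    · -- compatible case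
      have hminmax : ∀ i, min (p12 i 1) (p13 i 0) + max (p13 i 0 - p12 i 1) 0 = p13 i 0 := by
        intro i
        rcases le_total (p12 i 1) (p13 i 0) with h | h
        · rw [min_eq_left h, max_eq_left (by linarith)]; ring
        · rw [min_eq_right h, max_eq_right (by linarith)]; ring
      have hsum_mm : ∑ i, min (p12 i 1) (p13 i 0) + ∑ i, max (p13 i 0 - p12 i 1) 0
          = ∑ i, p13 i 0 := by
        rw [← e1]
        exact Finset.sum_congr rfl (fun i _ => hminmax i)
      obtain ⟨q00, q01, q10, q11, hq1, hq2, hq3, hq4, hq5, hq6, hq7, hq8,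
        hq9, hq10', hq11', hq12, hqt⟩ :=
        cons_compat r (fun i => p12 i 0) (fun i => p12 i 1) (fun i => p13 i 0)
          (fun i => p13 i 1) (p23 0 0) (p23 0 1) (p23 1 0) (p23 1 1)
          (fun i => h12n i 0) (fun i => h12n i 1) (fun i => h13n i 0) (fun i => h13n i 1)
          hcn1 (hcn2 0) (hcn2 1) (by linarith [hcn3 0]) (by linarith [hs23])
          (by linarith [hsum_mm, hcn3 0, hΔ1]) (by linarith [hΔ0])
      have key := ub_core r (fun i => p12 i 0) (fun i => p12 i 1) (fun i => p13 i 0)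
        (fun i => p13 i 1) (p23 0 0) (p23 0 1) (p23 1 0) (p23 1 1) 0
        q00 q01 q10 q11 hq1 hq2 hq3 hq4 hq5 hq6 hq7 hq8 hq9 hq10' hq11' hq12
        (by rw [hqt]; norm_num) hs12 hs13 (by linarith [hs23])
        (fun i => f12 i 0) (fun i => f12 i 1) (fun i => f13 i 0) (fun i => f13 i 1)
        (f23 0 0) (f23 0 1) (f23 1 0) (f23 1 1)
        (fun i => hbf12 i 0) (fun i => hbf12 i 1) (fun i => hbf13 i 0) (fun i => hbf13 i 1)
        (hbf23 0 0) (hbf23 0 1) (hbf23 1 0) (hbf23 1 1)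
        (fun i => hfeas i 0 0) (fun i => hfeas i 0 1) (fun i => hfeas i 1 0)
        (fun i => hfeas i 1 1)
      rw [hjoin] at key
      linarith [hmax.2.2]
  -- T is in the set
  have hmemT : T ∈ {t | ∃ (f12 : Fin r → Fin 2 → ℝ) (f23 : Fin 2 → Fin 2 → ℝ)
      (f13 : Fin r → Fin 2 → ℝ),
      (∀ i j, -1 ≤ f12 i j) ∧ (∀ j k, -1 ≤ f23 j k) ∧ (∀ i k, -1 ≤ f13 i k) ∧
      (∀ i j k, 0 ≤ f12 i j + f23 j k + f13 i k) ∧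
      t = -(1 / 3) * ((∑ i, ∑ j, f12 i j * p12 i j) + (∑ j, ∑ k, f23 j k * p23 j k) +
            (∑ i, ∑ k, f13 i k * p13 i k))} := by
    rcases le_total Δ0 0 with h0 | h0 <;> rcases le_total Δ1 0 with h1 | h1
    · have : T = 0 := by rw [hT, max_eq_right h0, max_eq_right h1, max_self]; ring
      rw [this]; exact hmem00
    · have : T = 2 * Δ1 := by
        rw [hT, max_eq_right h0, max_eq_left h1, max_eq_right h1]
      rw [this]; exact hmem1
    · have : T = 2 * Δ0 := by
        rw [hT, max_eq_left h0, max_eq_right h1, max_eq_left h0]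
      rw [this]; exact hmem0
    · rcases le_total Δ0 Δ1 with h01 | h01
      · have : T = 2 * Δ1 := by
          rw [hT, max_eq_left h0, max_eq_left h1, max_eq_right h01]
        rw [this]; exact hmem1
      · have : T = 2 * Δ0 := by
          rw [hT, max_eq_left h0, max_eq_left h1, max_eq_left h01]
        rw [this]; exact hmem0
  exact le_antisymm (csSup_le ⟨T, hmemT⟩ hub) (le_csSup ⟨T, hub⟩ hmemT)
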